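/- (Partition-of-unity eigenvalue comparison, discrete IMS localization) Let (η_k)_{k ∈ K} be finitely supported functions on ℤ^d with Σ_k η_k(z)² = 1 for all z, and define Φ(z) = κ Σ_k |∇η_k(z)|², where |∇f(z)|² = Σ_{y ∼ z}(f(y)-f(z))². Then for every g : ℤ^d → ℝ with ‖g‖₂ = 1 and every potential V ≤ 0: Σ_z [-κ|∇g(z)|² + (V(z)-Φ(z))g(z)²] ≤ Σ_k ‖g η_k‖₂² · G^V(g η_k / ‖g η_k‖₂), where G^V(h) = Σ_z [-κ|∇h(z)|² + V(z)h(z)²]. Consequently the principal Dirichlet eigenvalue of κΔ^d + V - Φ in any box is at most the maximum over k of the principal Dirichlet eigenvalue of κΔ^d + V on the support of η_k. -/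

import Mathlib

open scoped BigOperators ENNReal

noncomputable def auxPhi : ℝ≥0∞ →+ EReal where
  toFun := fun x => -(x : EReal)
  map_zero' := by simp
  map_add' := fun a b => by
    show -((a+b : ℝ≥0∞) : EReal) = _
    rw [EReal.coe_ennreal_add, EReal.neg_add (Or.inl (EReal.coe_ennreal_ne_bot a))
      (Or.inr (EReal.coe_ennreal_ne_bot b)), sub_eq_add_neg]

lemma aux_neg_coe_hasSum {ι : Type*} (q : ι → ℝ≥0∞) :
    HasSum (fun i => -(q i : EReal)) (-((∑' i, q i : ℝ≥0∞) : EReal)) :=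
  (ENNReal.summable.hasSum (f := q)).map auxPhi
    (by exact continuous_neg.comp continuous_coe_ennreal_ereal)

lemma aux_tsum_neg_coe {ι : Type*} (q : ι → ℝ≥0∞) :
    ∑' i, -(q i : EReal) = -((∑' i, q i : ℝ≥0∞) : EReal) :=
  (aux_neg_coe_hasSum q).tsum_eq

lemma aux_neg_coe_add (a b : ℝ≥0∞) :
    -((a + b : ℝ≥0∞) : EReal) = -(a : EReal) + -(b : EReal) := by
  rw [EReal.coe_ennreal_add, EReal.neg_add (Or.inl (EReal.coe_ennreal_ne_bot a))
    (Or.inr (EReal.coe_ennreal_ne_bot b)), sub_eq_add_neg]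

lemma aux_exists_neg_coe : ∀ {x : EReal}, x ≤ 0 → ∃ q : ℝ≥0∞, x = -(q : EReal)
  | ⊥, _ => ⟨⊤, by simp⟩
  | ⊤, h => absurd h (by simp)
  | (r : ℝ), h => ⟨ENNReal.ofReal (-r), by
      rw [EReal.coe_ennreal_ofReal, max_eq_left (neg_nonneg.2 (EReal.coe_nonpos.1 h))]
      simp⟩

lemma aux_coe_ennreal_ofReal_of_nonneg {x : ℝ} (hx : 0 ≤ x) :
    ((ENNReal.ofReal x : ℝ≥0∞) : EReal) = (x : ℝ) := by
  rw [EReal.coe_ennreal_ofReal, max_eq_left hx]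


/-- Discrete squared gradient: `|∇f(z)|² = ∑_{y ∼ z} (f(y) - f(z))²`,
the sum running over the `2d` nearest neighbors of `z` in `ℤ^d`. -/
noncomputable def gradSq (d : ℕ) (f : (Fin d → ℤ) → ℝ) (z : Fin d → ℤ) : ℝ :=
  ∑ i : Fin d,
    ((f (z + Pi.single i 1) - f z) ^ 2 + (f (z - Pi.single i 1) - f z) ^ 2)

/-- The quadratic form `G^V(h) = ∑_z [-κ|∇h(z)|² + V(z)h(z)²]`, with values
in `EReal` since `V` may take the value `-∞`. -/
noncomputable def quadForm (d : ℕ) (κ : ℝ) (V : (Fin d → ℤ) → EReal)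
    (h : (Fin d → ℤ) → ℝ) : EReal :=
  ∑' z, (-(((κ * gradSq d h z : ℝ)) : EReal) + V z * (((h z) ^ 2 : ℝ) : EReal))

/-- Principal Dirichlet eigenvalue of `κΔᵈ + V` on a region `S ⊆ ℤ^d`, via
the Rayleigh–Ritz formula over finitely supported `ℓ²`-normalized functions. -/
noncomputable def principalEV (d : ℕ) (κ : ℝ) (S : Set (Fin d → ℤ))
    (V : (Fin d → ℤ) → EReal) : EReal :=
  sSup { r : EReal | ∃ g : (Fin d → ℤ) → ℝ,
    (Function.support g).Finite ∧ (∑' z, (g z) ^ 2) = 1 ∧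
    Function.support g ⊆ S ∧ r = quadForm d κ V g }

lemma gradSq_nonneg (d : ℕ) (f : (Fin d → ℤ) → ℝ) (z : Fin d → ℤ) :
    0 ≤ gradSq d f z := by
  apply Finset.sum_nonneg; intro i _; positivity

/-- ENNReal representation of a quadForm-type term. -/
lemma aux_term_rep {κG a : ℝ} (hG : 0 ≤ κG) (ha : 0 ≤ a) (W : ℝ≥0∞) :
    -((κG : ℝ) : EReal) + (-(W : EReal)) * ((a : ℝ) : EReal)
      = -((ENNReal.ofReal κG + W * ENNReal.ofReal a : ℝ≥0∞) : EReal) := by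
  rw [aux_neg_coe_add, aux_coe_ennreal_ofReal_of_nonneg hG, neg_mul,
    EReal.coe_ennreal_mul, aux_coe_ennreal_ofReal_of_nonneg ha]

lemma aux_quad_rep (d : ℕ) (κ : ℝ) (hκ : 0 ≤ κ) (V : (Fin d → ℤ) → EReal)
    (W : (Fin d → ℤ) → ℝ≥0∞) (hVW : ∀ z, V z = -(W z : EReal))
    (h : (Fin d → ℤ) → ℝ) :
    (∑' z, (-(((κ * gradSq d h z : ℝ)) : EReal) + V z * (((h z) ^ 2 : ℝ) : EReal)))
      = -((∑' z, (ENNReal.ofReal (κ * gradSq d h z)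
          + W z * ENNReal.ofReal ((h z) ^ 2) : ℝ≥0∞) : ℝ≥0∞) : EReal) := by
  rw [← aux_tsum_neg_coe]
  refine tsum_congr fun z => ?_
  rw [hVW z, aux_term_rep (mul_nonneg hκ (gradSq_nonneg _ _ _)) (sq_nonneg _)]

lemma quadForm_rep (d : ℕ) (κ : ℝ) (hκ : 0 ≤ κ) (V : (Fin d → ℤ) → EReal)
    (W : (Fin d → ℤ) → ℝ≥0∞) (hVW : ∀ z, V z = -(W z : EReal))
    (h : (Fin d → ℤ) → ℝ) :
    quadForm d κ V h
      = -((∑' z, (ENNReal.ofReal (κ * gradSq d h z)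
          + W z * ENNReal.ofReal ((h z) ^ 2) : ℝ≥0∞) : ℝ≥0∞) : EReal) :=
  aux_quad_rep d κ hκ V W hVW h

lemma aux_summable_of_finite_support {α : Type*} {f : α → ℝ}
    (hf : (Function.support f).Finite) : Summable f :=
  summable_of_ne_finset_zero (s := hf.toFinset) fun b hb => by
    by_contra h; exact hb (hf.mem_toFinset.2 h)

lemma gradSq_div (d : ℕ) (h : (Fin d → ℤ) → ℝ) (c : ℝ) (z : Fin d → ℤ) :
    gradSq d (fun w => h w / c) z = gradSq d h z / c ^ 2 := by
  unfold gradSq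
  rw [Finset.sum_div]
  refine Finset.sum_congr rfl fun i _ => ?_
  rw [div_sub_div_same, div_sub_div_same, div_pow, div_pow, add_div]

lemma quadForm_zero (d : ℕ) (κ : ℝ) (V : (Fin d → ℤ) → EReal)
    (h : (Fin d → ℤ) → ℝ) (hh : ∀ z, h z = 0) :
    quadForm d κ V h = 0 := by
  unfold quadForm
  rw [← tsum_zero (β := (Fin d → ℤ)) (α := EReal)]
  refine tsum_congr fun z => ?_
  have hg : gradSq d h z = 0 := by
    unfold gradSq; simp [hh]
  rw [hg, hh]
  norm_num

/-- `‖h‖² • quadForm(h/‖h‖) = quadForm h`. -/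
lemma quadForm_scal (d : ℕ) (κ : ℝ) (hκ : 0 ≤ κ) (V : (Fin d → ℤ) → EReal)
    (W : (Fin d → ℤ) → ℝ≥0∞) (hVW : ∀ z, V z = -(W z : EReal))
    (h : (Fin d → ℤ) → ℝ) (N : ℝ) (hN : 0 < N) :
    ((N : ℝ) : EReal) * quadForm d κ V (fun w => h w / Real.sqrt N)
      = quadForm d κ V h := by
  set c : ℝ := Real.sqrt N with hc
  have hc2 : c ^ 2 = N := Real.sq_sqrt hN.le
  have hrep1 := quadForm_rep d κ hκ V W hVW (fun w => h w / c)
  have hrep2 := quadForm_rep d κ hκ V W hVW h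
  rw [hrep1, hrep2]
  set r : ℝ := (c ^ 2)⁻¹ with hr
  have hrnn : 0 ≤ r := by positivity
  have hc0 : c ≠ 0 := (Real.sqrt_pos.2 hN).ne'
  have hterm : ∀ z, ENNReal.ofReal (κ * gradSq d (fun w => h w / c) z)
      + W z * ENNReal.ofReal (((fun w => h w / c) z) ^ 2)
      = (ENNReal.ofReal (κ * gradSq d h z) + W z * ENNReal.ofReal ((h z) ^ 2))
          * ENNReal.ofReal r := by
    intro z
    have h1 : κ * gradSq d (fun w => h w / c) z = (κ * gradSq d h z) * r := by
      rw [gradSq_div, hr]; field_simp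
    have h2 : ((fun w => h w / c) z) ^ 2 = (h z) ^ 2 * r := by
      simp only [div_pow, hr]; field_simp
    rw [h1, h2, ENNReal.ofReal_mul (by exact mul_nonneg hκ (gradSq_nonneg _ _ _)),
      ENNReal.ofReal_mul (sq_nonneg _), add_mul, mul_assoc]
  rw [tsum_congr hterm, ENNReal.tsum_mul_right, mul_neg]
  congr 1
  rw [show ((N : ℝ) : EReal) = ((ENNReal.ofReal N : ℝ≥0∞) : EReal) from
    (aux_coe_ennreal_ofReal_of_nonneg hN.le).symm, ← EReal.coe_ennreal_mul]
  congr 1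
  rw [mul_comm, mul_assoc, ← ENNReal.ofReal_mul hrnn,
    show r * N = 1 by rw [hr, hc2]; field_simp, ENNReal.ofReal_one, mul_one]

section Edge
variable {K : Type*} {A : Type*} (η : K → A → ℝ)
  (hpart : ∀ z, ∑' k, (η k z) ^ 2 = 1)
include hpart

lemma aux_eta_sq_summable (x : A) : Summable (fun k => (η k x) ^ 2) := by
  by_contra h
  have := tsum_eq_zero_of_not_summable h
  rw [hpart x] at this
  norm_num at this

lemma aux_S_summable (x y : A) : Summable (fun k => (η k y - η k x) ^ 2) := by
  apply Summable.of_nonneg_of_le (fun k => sq_nonneg _)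
    (fun k => ?_) (((aux_eta_sq_summable η hpart y).add
      (aux_eta_sq_summable η hpart x)).mul_left 2)
  nlinarith [sq_nonneg (η k y + η k x)]

lemma aux_edge_hasSum (g : A → ℝ) (x y : A) :
    HasSum (fun k => (g y * η k y - g x * η k x) ^ 2)
      ((g y - g x) ^ 2 + (g x * g y) * ∑' k, (η k y - η k x) ^ 2) := by
  have hS : HasSum (fun k => (η k y - η k x) ^ 2) (∑' k, (η k y - η k x) ^ 2) :=
    (aux_S_summable η hpart x y).hasSum
  have hx : HasSum (fun k => (η k x) ^ 2) 1 := by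
    have := (aux_eta_sq_summable η hpart x).hasSum
    rwa [hpart x] at this
  have hy : HasSum (fun k => (η k y) ^ 2) 1 := by
    have := (aux_eta_sq_summable η hpart y).hasSum
    rwa [hpart y] at this
  have H := ((hS.mul_left (g x * g y)).add
      (hy.mul_left (g y ^ 2 - g x * g y))).add
      (hx.mul_left (g x ^ 2 - g x * g y))
  have Heq : (fun k => (g x * g y) * (η k y - η k x) ^ 2
      + (g y ^ 2 - g x * g y) * (η k y) ^ 2
      + (g x ^ 2 - g x * g y) * (η k x) ^ 2)
      = fun k => (g y * η k y - g x * η k x) ^ 2 := by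
    funext k; ring
  rw [Heq] at H
  convert H using 1
  · rfl
  ring

lemma aux_edge_ineq (g : A → ℝ) (x y : A) :
    2 * ∑' k, ENNReal.ofReal ((g y * η k y - g x * η k x) ^ 2)
      ≤ 2 * ENNReal.ofReal ((g y - g x) ^ 2)
        + (∑' k, ENNReal.ofReal ((η k y - η k x) ^ 2))
            * (ENNReal.ofReal ((g x) ^ 2) + ENNReal.ofReal ((g y) ^ 2)) := by
  set S : ℝ := ∑' k, (η k y - η k x) ^ 2 with hSdef
  have hSnn : 0 ≤ S := tsum_nonneg fun k => sq_nonneg _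
  have hSsum : Summable (fun k => (η k y - η k x) ^ 2) := aux_S_summable η hpart x y
  have h1 : ∑' k, ENNReal.ofReal ((g y * η k y - g x * η k x) ^ 2)
      = ENNReal.ofReal ((g y - g x) ^ 2 + (g x * g y) * S) := by
    rw [← (aux_edge_hasSum η hpart g x y).tsum_eq,
      ENNReal.ofReal_tsum_of_nonneg (fun k => sq_nonneg _)
      ⟨_, aux_edge_hasSum η hpart g x y⟩]
  have h2 : ∑' k, ENNReal.ofReal ((η k y - η k x) ^ 2) = ENNReal.ofReal S := by
    rw [hSdef, ENNReal.ofReal_tsum_of_nonneg (fun k => sq_nonneg _) hSsum]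
  rw [h1, h2, ← ENNReal.ofReal_add (sq_nonneg _) (sq_nonneg _),
    ← ENNReal.ofReal_mul hSnn]
  rw [show (2 : ℝ≥0∞) = ENNReal.ofReal 2 by norm_num, ← ENNReal.ofReal_mul (by norm_num),
    ← ENNReal.ofReal_mul (by norm_num), ← ENNReal.ofReal_add (by positivity) (by positivity)]
  apply ENNReal.ofReal_le_ofReal
  nlinarith [sq_nonneg (g x - g y), mul_nonneg (sq_nonneg (g x - g y)) hSnn]

end Edge

noncomputable def auxP (d : ℕ) (f : (Fin d → ℤ) → ℝ) (i : Fin d)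
    (z : Fin d → ℤ) : ℝ≥0∞ :=
  ENNReal.ofReal ((f (z + Pi.single i 1) - f z) ^ 2)

lemma aux_grad_decomp (d : ℕ) (f : (Fin d → ℤ) → ℝ) (z : Fin d → ℤ) :
    ENNReal.ofReal (gradSq d f z)
      = ∑ i : Fin d, (auxP d f i z + auxP d f i (z - Pi.single i 1)) := by
  unfold gradSq
  rw [ENNReal.ofReal_sum_of_nonneg (fun i _ => by positivity)]
  refine Finset.sum_congr rfl fun i _ => ?_
  rw [ENNReal.ofReal_add (sq_nonneg _) (sq_nonneg _)]
  congr 1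
  unfold auxP
  rw [sub_add_cancel]
  congr 1
  ring

lemma aux_grad_tsum (d : ℕ) (f : (Fin d → ℤ) → ℝ) :
    ∑' z, ENNReal.ofReal (gradSq d f z)
      = ∑ i : Fin d, 2 * ∑' z, auxP d f i z := by
  rw [tsum_congr (aux_grad_decomp d f), Summable.tsum_finsetSum (fun i _ => ENNReal.summable)]
  refine Finset.sum_congr rfl fun i _ => ?_
  have hEq := (Equiv.subRight (Pi.single i 1 : Fin d → ℤ)).tsum_eq (auxP d f i)
  simp only [Equiv.subRight_apply] at hEq
  rw [ENNReal.tsum_add, hEq, two_mul]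

section Main
variable {K : Type*} (d : ℕ) (η : K → (Fin d → ℤ) → ℝ)
  (hpart : ∀ z, ∑' k, (η k z) ^ 2 = 1)
include hpart

lemma aux_gradSq_summable (z : Fin d → ℤ) :
    Summable (fun k => gradSq d (η k) z) := by
  unfold gradSq
  apply summable_sum
  intro i _
  exact (aux_S_summable η hpart z (z + Pi.single i 1)).add
    (aux_S_summable η hpart z (z - Pi.single i 1))

lemma aux_grad_main (g : (Fin d → ℤ) → ℝ) :
    ∑' (k : K), ∑' z, ENNReal.ofReal (gradSq d (fun w => g w * η k w) z)
      ≤ ∑' z, ENNReal.ofReal (gradSq d g z)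
        + ∑' z, ENNReal.ofReal (∑' k, gradSq d (η k) z)
            * ENNReal.ofReal ((g z) ^ 2) := by
  set Sp : Fin d → (Fin d → ℤ) → ℝ≥0∞ :=
    fun i z => ∑' k, auxP d (η k) i z with hSp
  -- rewrite LHS
  have hL : ∑' (k : K), ∑' z, ENNReal.ofReal (gradSq d (fun w => g w * η k w) z)
      = ∑ i : Fin d, 2 * ∑' z, ∑' (k : K), auxP d (fun w => g w * η k w) i z := by
    rw [tsum_congr (fun k => aux_grad_tsum d (fun w => g w * η k w)),
      Summable.tsum_finsetSum (fun i _ => ENNReal.summable)]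
    refine Finset.sum_congr rfl fun i _ => ?_
    rw [ENNReal.tsum_mul_left, ENNReal.tsum_comm]
  -- rewrite RHS second term
  have hPhi : ∀ z, ENNReal.ofReal (∑' k, gradSq d (η k) z)
      = ∑ i : Fin d, (Sp i z + Sp i (z - Pi.single i 1)) := by
    intro z
    rw [ENNReal.ofReal_tsum_of_nonneg (fun k => gradSq_nonneg d (η k) z)
      (aux_gradSq_summable d η hpart z),
      tsum_congr (fun k => aux_grad_decomp d (η k) z),
      Summable.tsum_finsetSum (fun i _ => ENNReal.summable)]
    refine Finset.sum_congr rfl fun i _ => ?_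
    rw [ENNReal.tsum_add]
  have hR : ∑' z, ENNReal.ofReal (∑' k, gradSq d (η k) z)
        * ENNReal.ofReal ((g z) ^ 2)
      = ∑ i : Fin d, (∑' z, Sp i z * ENNReal.ofReal ((g z) ^ 2)
          + ∑' z, Sp i z * ENNReal.ofReal ((g (z + Pi.single i 1)) ^ 2)) := by
    rw [tsum_congr (fun z => by rw [hPhi z, Finset.sum_mul]),
      Summable.tsum_finsetSum (fun i _ => ENNReal.summable)]
    refine Finset.sum_congr rfl fun i _ => ?_
    rw [tsum_congr (fun z => add_mul (Sp i z) _ _), ENNReal.tsum_add]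
    congr 1
    have hEq := (Equiv.addRight (Pi.single i 1 : Fin d → ℤ)).tsum_eq
      (fun z => Sp i (z - Pi.single i 1) * ENNReal.ofReal ((g z) ^ 2))
    simp only [Equiv.coe_addRight, add_sub_cancel_right] at hEq
    exact hEq.symm
  rw [hL, hR, aux_grad_tsum d g, ← Finset.sum_add_distrib]
  refine Finset.sum_le_sum fun i _ => ?_
  rw [← ENNReal.tsum_mul_left, ← ENNReal.tsum_mul_left, ← ENNReal.tsum_add,
    ← ENNReal.tsum_add]
  refine ENNReal.tsum_le_tsum fun z => ?_
  rw [← mul_add]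
  have hthis := aux_edge_ineq η hpart g z (z + Pi.single i 1)
  simp only [hSp, auxP]
  exact hthis
end Main

/-- Discrete IMS localization: given a partition of unity `∑_k η_k² ≡ 1` with
localization error `Φ = κ ∑_k |∇η_k|²`, for every normalized `g` one has
`G^{V-Φ}(g) ≤ ∑_k ‖gη_k‖₂² G^V(gη_k/‖gη_k‖₂)`; consequently the principal
Dirichlet eigenvalue of `κΔᵈ + V - Φ` on any region is at most the supremum
over `k` of the principal eigenvalue of `κΔᵈ + V` on `supp η_k`. -/
theorem stmt_14 (d : ℕ) (κ : ℝ) (hκ : 0 < κ) {K : Type*}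
    (η : K → (Fin d → ℤ) → ℝ)
    (hfin : ∀ k, (Function.support (η k)).Finite)
    (hpart : ∀ z, ∑' k, (η k z) ^ 2 = 1)
    (V : (Fin d → ℤ) → EReal) (hV : ∀ z, V z ≤ 0)
    (Φ : (Fin d → ℤ) → ℝ)
    (hΦ : ∀ z, Φ z = κ * ∑' k, gradSq d (η k) z) :
    (∀ g : (Fin d → ℤ) → ℝ, (Function.support g).Finite →
      (∑' z, (g z) ^ 2) = 1 →
      (∑' z, (-(((κ * gradSq d g z : ℝ)) : EReal) +
          (V z - ((Φ z : ℝ) : EReal)) * (((g z) ^ 2 : ℝ) : EReal))) ≤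
        ∑' k, ((((∑' z, (g z * η k z) ^ 2 : ℝ)) : EReal) *
          quadForm d κ V
            (fun z => g z * η k z / Real.sqrt (∑' w, (g w * η k w) ^ 2)))) ∧
      ∀ S : Set (Fin d → ℤ),
        principalEV d κ S (fun z => V z - ((Φ z : ℝ) : EReal)) ≤
          ⨆ k, principalEV d κ (Function.support (η k)) V := by
  have hκ' : 0 ≤ κ := hκ.le
  choose W hW using fun z => aux_exists_neg_coe (hV z)
  have hΦnn : ∀ z, 0 ≤ Φ z := fun z => by
    rw [hΦ z]
    exact mul_nonneg hκ' (tsum_nonneg fun k => gradSq_nonneg _ _ _)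
  set W' : (Fin d → ℤ) → ℝ≥0∞ := fun z => W z + ENNReal.ofReal (Φ z) with hW'def
  have hW' : ∀ z, V z - ((Φ z : ℝ) : EReal) = -(W' z : EReal) := by
    intro z
    rw [hW'def, aux_neg_coe_add, aux_coe_ennreal_ofReal_of_nonneg (hΦnn z),
      hW z, sub_eq_add_neg]
  -- per-point sum over k of squares
  have hz_sq : ∀ (g : (Fin d → ℤ) → ℝ) (z : Fin d → ℤ),
      ∑' k, ENNReal.ofReal ((g z * η k z) ^ 2) = ENNReal.ofReal ((g z) ^ 2) := by
    intro g z
    have h1 : ∀ k, ENNReal.ofReal ((g z * η k z) ^ 2)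
        = ENNReal.ofReal ((η k z) ^ 2) * ENNReal.ofReal ((g z) ^ 2) := by
      intro k
      rw [← ENNReal.ofReal_mul (sq_nonneg _)]
      congr 1
      ring
    rw [tsum_congr h1, ENNReal.tsum_mul_right,
      ← ENNReal.ofReal_tsum_of_nonneg (fun k => sq_nonneg _)
        (aux_eta_sq_summable η hpart z), hpart z, ENNReal.ofReal_one, one_mul]
  -- key part 1 with quadForm RHS
  have key1 : ∀ g : (Fin d → ℤ) → ℝ, (Function.support g).Finite →
      (∑' z, (g z) ^ 2) = 1 →
      (∑' z, (-(((κ * gradSq d g z : ℝ)) : EReal) +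
          (V z - ((Φ z : ℝ) : EReal)) * (((g z) ^ 2 : ℝ) : EReal))) ≤
        ∑' k, quadForm d κ V (fun z => g z * η k z) := by
    intro g hgfin hgnorm
    have hLrep : (∑' z, (-(((κ * gradSq d g z : ℝ)) : EReal) +
        (V z - ((Φ z : ℝ) : EReal)) * (((g z) ^ 2 : ℝ) : EReal)))
        = -((∑' z, (ENNReal.ofReal (κ * gradSq d g z)
            + W' z * ENNReal.ofReal ((g z) ^ 2)) : ℝ≥0∞) : EReal) := by
      rw [← aux_tsum_neg_coe]
      refine tsum_congr fun z => ?_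
      rw [hW' z, aux_term_rep (mul_nonneg hκ' (gradSq_nonneg _ _ _)) (sq_nonneg _)]
    have hQrep : ∀ k, quadForm d κ V (fun z => g z * η k z)
        = -((∑' z, (ENNReal.ofReal (κ * gradSq d (fun w => g w * η k w) z)
            + W z * ENNReal.ofReal ((g z * η k z) ^ 2)) : ℝ≥0∞) : EReal) := by
      intro k
      exact quadForm_rep d κ hκ' V W hW (fun w => g w * η k w)
    rw [hLrep, tsum_congr hQrep, aux_tsum_neg_coe, EReal.neg_le_neg_iff,
      EReal.coe_ennreal_le_coe_ennreal_iff]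
    -- now pure ENNReal
    have hsplit : ∀ k, (∑' z, (ENNReal.ofReal (κ * gradSq d (fun w => g w * η k w) z)
        + W z * ENNReal.ofReal ((g z * η k z) ^ 2)) : ℝ≥0∞)
        = ∑' z, ENNReal.ofReal (κ * gradSq d (fun w => g w * η k w) z)
          + ∑' z, W z * ENNReal.ofReal ((g z * η k z) ^ 2) :=
      fun k => ENNReal.tsum_add
    rw [tsum_congr hsplit, ENNReal.tsum_add, tsum_congr
      (fun z => show ENNReal.ofReal (κ * gradSq d g z) + W' z * ENNReal.ofReal ((g z) ^ 2)
        = (ENNReal.ofReal (κ * gradSq d g z)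
            + ENNReal.ofReal (Φ z) * ENNReal.ofReal ((g z) ^ 2))
          + W z * ENNReal.ofReal ((g z) ^ 2) by rw [hW'def]; ring), ENNReal.tsum_add]
    have hB : ∑' (k : K), ∑' z, W z * ENNReal.ofReal ((g z * η k z) ^ 2)
        = ∑' z, W z * ENNReal.ofReal ((g z) ^ 2) := by
      rw [ENNReal.tsum_comm]
      exact tsum_congr fun z => by rw [ENNReal.tsum_mul_left, hz_sq g z]
    rw [hB]
    refine add_le_add ?_ le_rfl
    -- gradient part
    have hofκ : ∀ (h : (Fin d → ℤ) → ℝ) (z : Fin d → ℤ),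
        ENNReal.ofReal (κ * gradSq d h z)
          = ENNReal.ofReal κ * ENNReal.ofReal (gradSq d h z) :=
      fun h z => ENNReal.ofReal_mul hκ'
    have hΦof : ∀ z, ENNReal.ofReal (Φ z) * ENNReal.ofReal ((g z) ^ 2)
        = ENNReal.ofReal κ * (ENNReal.ofReal (∑' k, gradSq d (η k) z)
            * ENNReal.ofReal ((g z) ^ 2)) := by
      intro z
      rw [hΦ z, ENNReal.ofReal_mul hκ', mul_assoc]
    calc ∑' (k : K), ∑' z, ENNReal.ofReal (κ * gradSq d (fun w => g w * η k w) z)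
        = ENNReal.ofReal κ * ∑' (k : K), ∑' z,
            ENNReal.ofReal (gradSq d (fun w => g w * η k w) z) := by
          rw [← ENNReal.tsum_mul_left]
          exact tsum_congr fun k => by
            rw [← ENNReal.tsum_mul_left]
            exact tsum_congr fun z => hofκ _ z
      _ ≤ ENNReal.ofReal κ * (∑' z, ENNReal.ofReal (gradSq d g z)
            + ∑' z, ENNReal.ofReal (∑' k, gradSq d (η k) z)
                * ENNReal.ofReal ((g z) ^ 2)) :=
          mul_le_mul_right (aux_grad_main d η hpart g) _
      _ = ∑' z, ENNReal.ofReal (κ * gradSq d g z)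
            + ∑' z, ENNReal.ofReal (Φ z) * ENNReal.ofReal ((g z) ^ 2) := by
          rw [mul_add, ← ENNReal.tsum_mul_left, ← ENNReal.tsum_mul_left]
          congr 1
          · exact tsum_congr fun z => (hofκ g z).symm
          · exact tsum_congr fun z => (hΦof z).symm
      _ = ∑' z, (ENNReal.ofReal (κ * gradSq d g z)
            + ENNReal.ofReal (Φ z) * ENNReal.ofReal ((g z) ^ 2)) :=
          ENNReal.tsum_add.symm
  -- key part 2: normalization identity
  have key2 : ∀ (g : (Fin d → ℤ) → ℝ), (Function.support g).Finite → ∀ k,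
      ((((∑' z, (g z * η k z) ^ 2 : ℝ)) : EReal) *
          quadForm d κ V
            (fun z => g z * η k z / Real.sqrt (∑' w, (g w * η k w) ^ 2)))
        = quadForm d κ V (fun z => g z * η k z) := by
    intro g hgfin k
    set N : ℝ := ∑' z, (g z * η k z) ^ 2 with hNdef
    have hNnn : 0 ≤ N := tsum_nonneg fun z => sq_nonneg _
    have hNsummable : Summable (fun z => (g z * η k z) ^ 2) := by
      apply aux_summable_of_finite_support
      apply hgfin.subset
      intro z hz
      simp only [Function.mem_support] at hz ⊢
      intro h0
      exact hz (by rw [h0]; ring_nf)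
    rcases eq_or_lt_of_le hNnn with hN0 | hNpos
    · -- N = 0
      have hzero : ∀ z, g z * η k z = 0 := by
        intro z
        have hle := Summable.le_tsum hNsummable z (fun j _ => sq_nonneg _)
        rw [← hNdef, ← hN0] at hle
        exact pow_eq_zero_iff (n := 2) (by norm_num) |>.1
          (le_antisymm hle (sq_nonneg _))
      have h1 : quadForm d κ V
          (fun z => g z * η k z / Real.sqrt N) = 0 := by
        apply quadForm_zero
        intro z
        rw [hzero z, zero_div]
      have h2 : quadForm d κ V (fun z => g z * η k z) = 0 :=
        quadForm_zero d κ V _ hzero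
      rw [h1, h2, mul_zero]
    · exact quadForm_scal d κ hκ' V W hW (fun z => g z * η k z) N hNpos
  constructor
  · intro g hgfin hgnorm
    calc (∑' z, (-(((κ * gradSq d g z : ℝ)) : EReal) +
          (V z - ((Φ z : ℝ) : EReal)) * (((g z) ^ 2 : ℝ) : EReal)))
        ≤ ∑' k, quadForm d κ V (fun z => g z * η k z) := key1 g hgfin hgnorm
      _ = _ := (tsum_congr (key2 g hgfin)).symm
  · intro S
    apply sSup_le
    rintro r ⟨g, hgfin, hgnorm, hgsupp, rfl⟩
    set c : EReal := ⨆ k, principalEV d κ (Function.support (η k)) V with hcdef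
    have hQF_nonpos : ∀ h : (Fin d → ℤ) → ℝ, quadForm d κ V h ≤ 0 := by
      intro h
      rw [quadForm_rep d κ hκ' V W hW h]
      exact EReal.neg_le.mpr (by rw [neg_zero]; exact EReal.coe_ennreal_nonneg _)
    have hc_nonpos : c ≤ 0 := by
      refine iSup_le fun k => sSup_le ?_
      rintro r ⟨h, _, _, _, rfl⟩
      exact hQF_nonpos h
    obtain ⟨γ, hγ⟩ := aux_exists_neg_coe hc_nonpos
    set Q : K → ℝ≥0∞ := fun k => ∑' z,
      (ENNReal.ofReal (κ * gradSq d (fun w => g w * η k w) z)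
        + W z * ENNReal.ofReal ((g z * η k z) ^ 2)) with hQdef
    have hQrep : ∀ k, quadForm d κ V (fun w => g w * η k w) = -(Q k : EReal) :=
      fun k => quadForm_rep d κ hκ' V W hW (fun w => g w * η k w)
    have hNsummable : ∀ k, Summable (fun z => (g z * η k z) ^ 2) := by
      intro k
      apply aux_summable_of_finite_support
      apply hgfin.subset
      intro z hz
      simp only [Function.mem_support] at hz ⊢
      intro h0
      exact hz (by rw [h0]; ring_nf)
    have hNof : ∑' (k : K), ENNReal.ofReal (∑' z, (g z * η k z) ^ 2) = 1 := by
      have h1 : ∀ k : K, ENNReal.ofReal (∑' z, (g z * η k z) ^ 2)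
          = ∑' z, ENNReal.ofReal ((g z * η k z) ^ 2) := fun k =>
        ENNReal.ofReal_tsum_of_nonneg (fun z => sq_nonneg _) (hNsummable k)
      rw [tsum_congr h1, ENNReal.tsum_comm, tsum_congr (hz_sq g),
        ← ENNReal.ofReal_tsum_of_nonneg (fun z => sq_nonneg _)
          (aux_summable_of_finite_support (hgfin.subset (by
            intro z hz
            simp only [Function.mem_support] at hz ⊢
            intro h0
            exact hz (by rw [h0]; ring_nf)))), hgnorm, ENNReal.ofReal_one]
    have hkey : ∀ k, ENNReal.ofReal (∑' z, (g z * η k z) ^ 2) * γ ≤ Q k := by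
      intro k
      set N : ℝ := ∑' z, (g z * η k z) ^ 2 with hNdef
      have hNnn : 0 ≤ N := tsum_nonneg fun z => sq_nonneg _
      rcases eq_or_lt_of_le hNnn with hN0 | hNpos
      · rw [← hN0, ENNReal.ofReal_zero, zero_mul]
        exact zero_le
      · -- normalized function is admissible
        set hnorm : (Fin d → ℤ) → ℝ := fun z => g z * η k z / Real.sqrt N
          with hhnorm
        have hsupp1 : Function.support hnorm ⊆ Function.support (η k) := by
          intro z hz
          simp only [Function.mem_support] at hz ⊢
          intro h0
          exact hz (by rw [hhnorm]; simp [h0])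
        have hsuppfin : (Function.support hnorm).Finite :=
          (hfin k).subset hsupp1
        have hnorm1 : (∑' z, (hnorm z) ^ 2) = 1 := by
          have : ∀ z, (hnorm z) ^ 2 = (g z * η k z) ^ 2 / N := by
            intro z
            rw [hhnorm]
            rw [div_pow, Real.sq_sqrt hNnn]
          rw [tsum_congr this, tsum_div_const, ← hNdef, div_self hNpos.ne']
        have hadm : quadForm d κ V hnorm
            ≤ principalEV d κ (Function.support (η k)) V :=
          le_sSup ⟨hnorm, hsuppfin, hnorm1, hsupp1, rfl⟩
        have hle_c : quadForm d κ V hnorm ≤ c :=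
          hadm.trans (le_iSup (fun k => principalEV d κ (Function.support (η k)) V) k)
        set Qn : ℝ≥0∞ := ∑' z,
          (ENNReal.ofReal (κ * gradSq d hnorm z)
            + W z * ENNReal.ofReal ((hnorm z) ^ 2)) with hQndef
        have hQnrep : quadForm d κ V hnorm = -(Qn : EReal) :=
          quadForm_rep d κ hκ' V W hW hnorm
        have hγQN : γ ≤ Qn := by
          rw [hQnrep, hγ, EReal.neg_le_neg_iff,
            EReal.coe_ennreal_le_coe_ennreal_iff] at hle_c
          exact hle_c
        have hscal : ((N : ℝ) : EReal) * quadForm d κ V hnorm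
            = quadForm d κ V (fun w => g w * η k w) := by
          rw [hhnorm]
          exact quadForm_scal d κ hκ' V W hW (fun z => g z * η k z) N hNpos
        have hQeq : Q k = ENNReal.ofReal N * Qn := by
          have h1 : -(Q k : EReal) = -((ENNReal.ofReal N * Qn : ℝ≥0∞) : EReal) := by
            rw [← hQrep k, ← hscal, hQnrep, EReal.coe_ennreal_mul,
              ← aux_coe_ennreal_ofReal_of_nonneg hNnn, mul_neg]
          exact EReal.coe_ennreal_injective (neg_injective h1)
        rw [hQeq]
        exact mul_le_mul_right hγQN _
    -- assemble part 2
    have hchain1 : quadForm d κ (fun z => V z - ((Φ z : ℝ) : EReal)) g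
        ≤ ∑' k, quadForm d κ V (fun w => g w * η k w) := key1 g hgfin hgnorm
    have hchain2 : ∑' (k : K), quadForm d κ V (fun w => g w * η k w)
        = -((∑' k, Q k : ℝ≥0∞) : EReal) := by
      rw [tsum_congr hQrep, aux_tsum_neg_coe]
    have hchain3 : γ ≤ ∑' k, Q k := by
      calc γ = (∑' (k : K), ENNReal.ofReal (∑' z, (g z * η k z) ^ 2)) * γ := by
            rw [hNof, one_mul]
        _ = ∑' (k : K), ENNReal.ofReal (∑' z, (g z * η k z) ^ 2) * γ :=
            ENNReal.tsum_mul_right.symm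
        _ ≤ ∑' k, Q k := ENNReal.tsum_le_tsum hkey
    calc quadForm d κ (fun z => V z - ((Φ z : ℝ) : EReal)) g
        ≤ ∑' k, quadForm d κ V (fun w => g w * η k w) := hchain1
      _ = -((∑' k, Q k : ℝ≥0∞) : EReal) := hchain2
      _ ≤ -(γ : EReal) := by
          rw [EReal.neg_le_neg_iff, EReal.coe_ennreal_le_coe_ennreal_iff]
          exact hchain3
      _ = c := hγ.symm
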